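/- Conjecture (M2) implies Conjecture (M1): assume that every unconditionally convergent invertible multiplier M_{m,Φ,Ψ} admits scalars (α_n),(β_n) with α_n·conj(β_n) = m_n such that (α_n φ_n) and (β_n ψ_n) are frames for H. Then every unconditionally convergent multiplier M_{m,Φ,Ψ} admits scalars (α_n),(β_n) with α_n·conj(β_n) = m_n such that (α_n φ_n) and (β_n ψ_n) are Bessel sequences. -/

import Mathlib

open scoped ENNReal NNReal

/-- The Bessel-type sum `∑ₙ |⟨f, gₙ⟩|²` valued in `ℝ≥0∞`. -/
noncomputable def bSum {H : Type*} [NormedAddCommGroup H] [InnerProductSpace ℂ H]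
    (g : ℕ → H) (f : H) : ℝ≥0∞ :=
  ∑' n, ((‖(inner ℂ f (g n) : ℂ)‖₊ : ℝ≥0∞)) ^ 2

lemma bSum_comp_le {H : Type*} [NormedAddCommGroup H] [InnerProductSpace ℂ H]
    (g : ℕ → H) (x : H) (ι : ℕ → ℕ) (hι : Function.Injective ι) :
    bSum (fun k => g (ι k)) x ≤ bSum g x :=
  ENNReal.tsum_comp_le_tsum_of_injective hι _

set_option maxHeartbeats 1000000 in
/-- Conjecture (M2) implies Conjecture (M1). -/
theorem stmt16 {H : Type*} [NormedAddCommGroup H] [InnerProductSpace ℂ H] [CompleteSpace H]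
    [TopologicalSpace.SeparableSpace H] (hinf : ¬ FiniteDimensional ℂ H)
    (hM2 : ∀ (Φ Ψ : ℕ → H) (m : ℕ → ℂ) (M : H → H),
      (∀ f : H, HasSum (fun n => (m n * (inner ℂ f (Ψ n) : ℂ)) • Φ n) (M f)) →
      Function.Bijective M →
      ∃ α β : ℕ → ℂ, (∀ n, α n * (starRingEnd ℂ) (β n) = m n) ∧
        (∃ A B : ℝ, 0 < A ∧ 0 < B ∧ ∀ x : H,
          ENNReal.ofReal A * (‖x‖₊ : ℝ≥0∞) ^ 2 ≤ bSum (fun n => α n • Φ n) x ∧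
          bSum (fun n => α n • Φ n) x ≤ ENNReal.ofReal B * (‖x‖₊ : ℝ≥0∞) ^ 2) ∧
        (∃ A B : ℝ, 0 < A ∧ 0 < B ∧ ∀ x : H,
          ENNReal.ofReal A * (‖x‖₊ : ℝ≥0∞) ^ 2 ≤ bSum (fun n => β n • Ψ n) x ∧
          bSum (fun n => β n • Ψ n) x ≤ ENNReal.ofReal B * (‖x‖₊ : ℝ≥0∞) ^ 2)) :
    ∀ (Φ Ψ : ℕ → H) (m : ℕ → ℂ),
      (∀ f : H, ∃ y : H, HasSum (fun n => (m n * (inner ℂ f (Ψ n) : ℂ)) • Φ n) y) →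
      ∃ α β : ℕ → ℂ, (∀ n, α n * (starRingEnd ℂ) (β n) = m n) ∧
        (∃ B : ℝ, 0 < B ∧ ∀ x : H,
          bSum (fun n => α n • Φ n) x ≤ ENNReal.ofReal B * (‖x‖₊ : ℝ≥0∞) ^ 2) ∧
        (∃ B : ℝ, 0 < B ∧ ∀ x : H,
          bSum (fun n => β n • Ψ n) x ≤ ENNReal.ofReal B * (‖x‖₊ : ℝ≥0∞) ^ 2) := by
  classical
  intro Φ Ψ m hconv
  -- choose the sums of the multiplier
  choose y hy using hconv
  -- a Hilbert basis
  obtain ⟨w, b, hb⟩ := exists_hilbertBasis ℂ H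
  have hON : Orthonormal ℂ ⇑b := b.orthonormal
  -- `w` is countable
  have hdist : ∀ i j : w, i ≠ j → (1 : ℝ) ≤ dist (b i) (b j) := by
    intro i j hij
    have h0 : (inner ℂ (b i) (b j) : ℂ) = 0 := hON.2 hij
    have hni : ‖b i‖ = 1 := hON.1 i
    have hnj : ‖b j‖ = 1 := hON.1 j
    have hsq : ‖b i - b j‖ ^ 2 = 2 := by
      rw [@norm_sub_sq ℂ, h0, hni, hnj]; norm_num
    rw [dist_eq_norm]
    nlinarith [norm_nonneg (b i - b j)]
  have hcw : Countable w := by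
    refine Pairwise.countable_of_isOpen_disjoint (ι := w)
      (s := fun i => Metric.ball (b i) (1/2)) ?_ (fun i => Metric.isOpen_ball)
      (fun i => Metric.nonempty_ball.2 (by norm_num))
    intro i j hij
    exact Metric.ball_disjoint_ball (by linarith [hdist i j hij])
  -- `w` is infinite
  have hiw : Infinite w := by
    by_contra hninf
    rw [not_infinite_iff_finite] at hninf
    have hwf : w.Finite := @Set.toFinite _ _ hninf
    have hfd : FiniteDimensional ℂ (Submodule.span ℂ w) := FiniteDimensional.span_of_finite ℂ hwf
    have hcl : IsClosed ((Submodule.span ℂ w : Submodule ℂ H) : Set H) :=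
      Submodule.closed_of_finiteDimensional _
    have hdense := b.dense_span
    rw [hb, Subtype.range_coe] at hdense
    rw [hcl.submodule_topologicalClosure_eq] at hdense
    rw [hdense] at hfd
    exact hinf Submodule.topEquiv.finiteDimensional
  obtain ⟨d⟩ := nonempty_denumerable ↥w
  let e : ℕ ≃ w := (Denumerable.eqv ↥w).symm
  let be : ℕ → H := fun k => b (e k)
  -- the conjugation
  set C : H → H := fun f => b.repr.symm (star (b.repr f)) with hC
  have hCinv : Function.Involutive C := by
    intro f
    simp only [hC, LinearIsometryEquiv.apply_symm_apply, star_star,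
      LinearIsometryEquiv.symm_apply_apply]
  have hCsum : ∀ f : H, HasSum (fun k : ℕ => (inner ℂ f (be k) : ℂ) • be k) (C f) := by
    intro f
    have h1 := b.hasSum_repr (C f)
    have h2 : b.repr (C f) = star (b.repr f) := b.repr.apply_symm_apply _
    rw [h2] at h1
    have h3 : (fun i : w => (star (b.repr f)) i • b i)
        = fun i : w => (inner ℂ f (b i) : ℂ) • (b i) := by
      funext i
      rw [lp.star_apply, b.repr_apply_apply, ← starRingEnd_apply, inner_conj_symm]
    rw [h3] at h1
    have h4 := e.hasSum_iff.mpr h1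
    simpa [Function.comp_def, be] using h4
  have hCbij : Function.Bijective C := hCinv.bijective
  -- the interleaved multiplier
  set m' : ℕ → ℂ :=
    fun n => if n % 2 = 0 then 1 else if n % 4 = 1 then m (n / 4) else -(m (n / 4)) with hm'
  set Φ' : ℕ → H := fun n => if n % 2 = 0 then be (n / 2) else Φ (n / 4) with hΦ'
  set Ψ' : ℕ → H := fun n => if n % 2 = 0 then be (n / 2) else Ψ (n / 4) with hΨ'
  have key : ∀ f : H, HasSum (fun n => (m' n * (inner ℂ f (Ψ' n) : ℂ)) • Φ' n) (C f) := by
    intro f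
    have heven : HasSum (fun k => (m' (2*k) * (inner ℂ f (Ψ' (2*k)) : ℂ)) • Φ' (2*k)) (C f) := by
      have hfix : (fun k => (m' (2*k) * (inner ℂ f (Ψ' (2*k)) : ℂ)) • Φ' (2*k))
          = fun k => (inner ℂ f (be k) : ℂ) • be k := by
        funext k
        have h2 : (2*k) % 2 = 0 := by omega
        have h3 : (2*k) / 2 = k := by omega
        simp [hm', hΦ', hΨ', h2, h3]
      rw [hfix]; exact hCsum f
    have hodd : HasSum (fun k => (m' (2*k+1) * (inner ℂ f (Ψ' (2*k+1)) : ℂ)) • Φ' (2*k+1)) 0 := by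
      have h1 : HasSum (fun j =>
          (m' (2*(2*j)+1) * (inner ℂ f (Ψ' (2*(2*j)+1)) : ℂ)) • Φ' (2*(2*j)+1)) (y f) := by
        have hfix : (fun j => (m' (2*(2*j)+1) * (inner ℂ f (Ψ' (2*(2*j)+1)) : ℂ)) • Φ' (2*(2*j)+1))
            = fun j => (m j * (inner ℂ f (Ψ j) : ℂ)) • Φ j := by
          funext j
          have e1 : (2*(2*j)+1) % 2 = 1 := by omega
          have e2 : (2*(2*j)+1) % 4 = 1 := by omega
          have e3 : (2*(2*j)+1) / 4 = j := by omega
          simp [hm', hΦ', hΨ', e1, e2, e3]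
        rw [hfix]; exact hy f
      have h2 : HasSum (fun j =>
          (m' (2*(2*j+1)+1) * (inner ℂ f (Ψ' (2*(2*j+1)+1)) : ℂ)) • Φ' (2*(2*j+1)+1)) (-(y f)) := by
        have hfix : (fun j =>
              (m' (2*(2*j+1)+1) * (inner ℂ f (Ψ' (2*(2*j+1)+1)) : ℂ)) • Φ' (2*(2*j+1)+1))
            = fun j => -((m j * (inner ℂ f (Ψ j) : ℂ)) • Φ j) := by
          funext j
          have e1 : (2*(2*j+1)+1) % 2 = 1 := by omega
          have e2 : (2*(2*j+1)+1) % 4 = 3 := by omega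
          have e3 : (2*(2*j+1)+1) / 4 = j := by omega
          simp [hm', hΦ', hΨ', e1, e2, e3, neg_mul, neg_smul]
        rw [hfix]; exact (hy f).neg
      have hsum0 := HasSum.even_add_odd
        (f := fun k => (m' (2*k+1) * (inner ℂ f (Ψ' (2*k+1)) : ℂ)) • Φ' (2*k+1)) h1 h2
      rw [add_neg_cancel] at hsum0
      exact hsum0
    have hsum1 := HasSum.even_add_odd
      (f := fun n => (m' n * (inner ℂ f (Ψ' n) : ℂ)) • Φ' n) heven hodd
    rw [add_zero] at hsum1
    exact hsum1
  obtain ⟨α', β', hprod, ⟨A₁, B₁, hA₁, hB₁, hfr₁⟩, ⟨A₂, B₂, hA₂, hB₂, hfr₂⟩⟩ :=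
    hM2 Φ' Ψ' m' C key hCbij
  have hΦfix : ∀ k, Φ k = Φ' (4*k+1) := by
    intro k
    have e1 : (4*k+1) % 2 = 1 := by omega
    have e3 : (4*k+1) / 4 = k := by omega
    simp [hΦ', e1, e3]
  have hΨfix : ∀ k, Ψ k = Ψ' (4*k+1) := by
    intro k
    have e1 : (4*k+1) % 2 = 1 := by omega
    have e3 : (4*k+1) / 4 = k := by omega
    simp [hΨ', e1, e3]
  refine ⟨fun k => α' (4*k+1), fun k => β' (4*k+1), ?_, ⟨B₁, hB₁, ?_⟩, ⟨B₂, hB₂, ?_⟩⟩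
  · intro k
    have h := hprod (4*k+1)
    have e1 : (4*k+1) % 2 = 1 := by omega
    have e2 : (4*k+1) % 4 = 1 := by omega
    have e3 : (4*k+1) / 4 = k := by omega
    simpa [hm', e1, e2, e3] using h
  · intro x
    have hfun : (fun k => α' (4*k+1) • Φ k)
        = fun k => (fun n => α' n • Φ' n) (4*k+1) := by
      funext k; simp only []; rw [hΦfix k]
    rw [hfun]
    exact (bSum_comp_le (fun n => α' n • Φ' n) x _ (fun a b h => by omega)).trans (hfr₁ x).2
  · intro x
    have hfun : (fun k => β' (4*k+1) • Ψ k)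
        = fun k => (fun n => β' n • Ψ' n) (4*k+1) := by
      funext k; simp only []; rw [hΨfix k]
    rw [hfun]
    exact (bSum_comp_le (fun n => β' n • Ψ' n) x _ (fun a b h => by omega)).trans (hfr₂ x).2
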